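/- The Thomson ring of n identical vortices of strength Γ placed at the same colatitude θ₀ on a sphere of radius R at the vertices of a regular n-gon rotates rigidly: the configuration θᵢ(t) = θ₀, φᵢ(t) = 2πi/n + ωt with ω = Γ(n−1)cotθ₀/(4πR² sinθ₀) solves the spherical vortex equations. -/

import Mathlib

open Real Finset

/-- Hamiltonian of `n` identical vortices of strength `Γ` on a sphere of
radius `R`, in spherical coordinates, with
`4R² sin²(γ/2) = 4R² (1 - cos γ)/2`. -/
noncomputable def sphereHam (n : ℕ) (R Γ : ℝ) (θ φ : Fin n → ℝ) : ℝ :=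
  -(1 / (4 * π)) * ∑ p ∈ Finset.univ.filter (fun p : Fin n × Fin n => p.1 < p.2),
    Γ * Γ * Real.log (4 * R ^ 2 *
      ((1 - (Real.cos (θ p.1) * Real.cos (θ p.2) +
        Real.sin (θ p.1) * Real.sin (θ p.2) * Real.cos (φ p.1 - φ p.2))) / 2))

/-- Summing an "only pairs containing `i`" function over ordered pairs. -/
lemma pair_sum {n : ℕ} (i : Fin n) (g : Fin n → ℝ) :
    ∑ p ∈ Finset.univ.filter (fun p : Fin n × Fin n => p.1 < p.2),
      (if p.1 = i then g p.2 else if p.2 = i then g p.1 else 0)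
    = ∑ k ∈ Finset.univ.filter (fun k => k ≠ i), g k := by
  rw [Finset.sum_filter, Finset.sum_filter, Fintype.sum_prod_type]
  have inner : ∀ a : Fin n,
      (∑ b, if a < b then (if a = i then g b else if b = i then g a else 0) else 0)
      = Function.update (fun a : Fin n => if a < i then g a else 0) i
          (∑ b, if i < b then g b else 0) a := by
    intro a
    by_cases ha : a = i
    · subst ha
      rw [Function.update_self]
      exact Finset.sum_congr rfl fun b _ => by split_ifs <;> simp_all
    · rw [Function.update_of_ne ha]
      have h : ∀ b, (if a < b then (if a = i then g b else if b = i then g a else 0) else 0)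
          = if b = i then (if a < b then g a else 0) else 0 := by
        intro b; split_ifs <;> simp_all
      rw [Finset.sum_congr rfl fun b _ => h b, Finset.sum_ite_eq' Finset.univ i]
      simp
  rw [Finset.sum_congr rfl fun a _ => inner a,
    Finset.sum_update_of_mem (Finset.mem_univ i)]
  have h2 : ∑ a ∈ Finset.univ \ {i}, (if a < i then g a else 0)
      = ∑ a : Fin n, if a < i then g a else 0 := by
    apply Finset.sum_subset Finset.sdiff_subset
    intro x _ hx
    have hxi : x = i := by simpa using hx
    simp [hxi]
  rw [h2, ← Finset.sum_add_distrib]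
  apply Finset.sum_congr rfl
  intro k _
  rcases lt_trichotomy k i with h | h | h
  · simp [h, h.ne, not_lt_of_gt h]
  · simp [h]
  · simp [h, h.ne', not_lt_of_gt h]

/-- The classical fact `∑_{k≠i} cot(π(i-k)/n) = 0` in the form needed here. -/
lemma ring_sum_zero (n : ℕ) [NeZero n] (i : Fin n) :
    ∑ k ∈ Finset.univ.filter (fun k => k ≠ i),
      Real.sin (2 * π * ((i : ℝ) - (k : ℝ)) / n) /
        (1 - Real.cos (2 * π * ((i : ℝ) - (k : ℝ)) / n)) = 0 := by
  have hn' : (n : ℝ) ≠ 0 := Nat.cast_ne_zero.2 (NeZero.ne n)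
  have hmod : ∀ σ k : Fin n, σ + k = i + i → ∃ c : ℤ,
      ((i : ℕ) : ℤ) - ((σ : ℕ) : ℤ) = (((k : ℕ) : ℤ) - ((i : ℕ) : ℤ)) + c * n := by
    intro σ k h
    have hv : ((σ : ℕ) + (k : ℕ)) % n = ((i : ℕ) + (i : ℕ)) % n := by
      rw [← Fin.val_add, ← Fin.val_add, h]
    have hz : (((σ : ℕ) : ℤ) + ((k : ℕ) : ℤ)) % (n : ℤ)
        = (((i : ℕ) : ℤ) + ((i : ℕ) : ℤ)) % (n : ℤ) := by exact_mod_cast hv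
    obtain ⟨c, hc⟩ := Int.ModEq.dvd hz
    exact ⟨c, by linear_combination hc⟩
  have hangle : ∀ σ k : Fin n, σ + k = i + i →
      Real.sin (2 * π * ((i : ℝ) - (σ : ℝ)) / n) /
        (1 - Real.cos (2 * π * ((i : ℝ) - (σ : ℝ)) / n))
      = -(Real.sin (2 * π * ((i : ℝ) - (k : ℝ)) / n) /
        (1 - Real.cos (2 * π * ((i : ℝ) - (k : ℝ)) / n))) := by
    intro σ k h
    obtain ⟨c, hc⟩ := hmod σ k h
    have hr : ((i : ℝ)) - (σ : ℝ) = (((k : ℝ)) - (i : ℝ)) + (c : ℝ) * n := by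
      exact_mod_cast hc
    have h2 : 2 * π * ((i : ℝ) - (σ : ℝ)) / n
        = -(2 * π * ((i : ℝ) - (k : ℝ)) / n) + (c : ℝ) * (2 * π) := by
      rw [hr]; field_simp; ring
    rw [h2, Real.sin_add_int_mul_two_pi, Real.cos_add_int_mul_two_pi,
      Real.sin_neg, Real.cos_neg, neg_div]
  refine Finset.sum_involution (fun k _ => i + (i - k)) ?_ ?_ ?_ ?_
  · intro k hk
    have h : (i + (i - k)) + k = i + i := by abel
    rw [hangle _ k h]
    ring
  · intro k hk hne heq
    apply hne
    have h : k + k = i + i := by nth_rewrite 1 [← heq]; abel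
    obtain ⟨c, hc⟩ := hmod k k h
    have hr : (i : ℝ) - (k : ℝ) = (((k : ℝ)) - (i : ℝ)) + (c : ℝ) * n := by
      exact_mod_cast hc
    have hy : 2 * π * ((i : ℝ) - (k : ℝ)) / n = (c : ℝ) * π := by
      field_simp
      linear_combination hr
    rw [hy, Real.sin_int_mul_pi, zero_div]
  · intro k hk
    simp only [Finset.mem_filter, Finset.mem_univ, true_and] at hk ⊢
    intro heq
    exact hk ((sub_eq_zero.mp (add_eq_left.mp heq)).symm)
  · intro k hk
    abel

/-- Derivative of a pair term of the Hamiltonian in the azimuthal variable,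
first slot. -/
lemma hasDerivAt_phi1 (R Γ C S d x : ℝ) (hR : R ≠ 0) (hS : S ≠ 0)
    (hc : 1 - Real.cos (x - d) ≠ 0) (hCS : C * C + S * S = 1) :
    HasDerivAt
      (fun u => Γ * Γ * Real.log (4 * R ^ 2 *
        ((1 - (C * C + S * S * Real.cos (u - d))) / 2)))
      (Γ * Γ * (Real.sin (x - d) / (1 - Real.cos (x - d)))) x := by
  have h1 : HasDerivAt (fun u : ℝ => u - d) 1 x := (hasDerivAt_id x).sub_const d
  have h2 : HasDerivAt (fun u : ℝ => Real.cos (u - d)) (-Real.sin (x - d)) x := by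
    simpa using h1.cos
  have h3 := ((((h2.const_mul (S * S)).const_add (C * C)).const_sub 1).div_const 2).const_mul
    (4 * R ^ 2)
  have hkey : 1 - (C * C + S * S * Real.cos (x - d)) = S * S * (1 - Real.cos (x - d)) := by
    linear_combination -hCS
  have harg : 4 * R ^ 2 * ((1 - (C * C + S * S * Real.cos (x - d))) / 2) ≠ 0 := by
    rw [hkey]
    intro h
    rcases mul_eq_zero.1 h with h | h
    · exact (by positivity : (0 : ℝ) < 4 * R ^ 2).ne' h
    · rcases div_eq_zero_iff.1 h with h | h
      · exact mul_ne_zero (mul_ne_zero hS hS) hc h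
      · norm_num at h
  have h4 := (h3.log harg).const_mul (Γ * Γ)
  refine h4.congr_deriv (Eq.symm ?_)
  congr 1
  rw [div_eq_div_iff hc harg]
  linear_combination (-(2 * R ^ 2 * Real.sin (x - d))) * hCS

/-- Derivative of a pair term of the Hamiltonian in the azimuthal variable,
second slot. -/
lemma hasDerivAt_phi2 (R Γ C S d x : ℝ) (hR : R ≠ 0) (hS : S ≠ 0)
    (hc : 1 - Real.cos (x - d) ≠ 0) (hCS : C * C + S * S = 1) :
    HasDerivAt
      (fun u => Γ * Γ * Real.log (4 * R ^ 2 *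
        ((1 - (C * C + S * S * Real.cos (d - u))) / 2)))
      (Γ * Γ * (Real.sin (x - d) / (1 - Real.cos (x - d)))) x := by
  have e : (fun u : ℝ => Γ * Γ * Real.log (4 * R ^ 2 *
        ((1 - (C * C + S * S * Real.cos (d - u))) / 2)))
      = (fun u : ℝ => Γ * Γ * Real.log (4 * R ^ 2 *
        ((1 - (C * C + S * S * Real.cos (u - d))) / 2))) := by
    funext u
    rw [show d - u = -(u - d) by ring, Real.cos_neg]
  rw [e]
  exact hasDerivAt_phi1 R Γ C S d x hR hS hc hCS

/-- Derivative of a pair term of the Hamiltonian in the colatitude variable,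
first slot. -/
lemma hasDerivAt_th1 (R Γ θ₀ E : ℝ) (hR : R ≠ 0) (hS : Real.sin θ₀ ≠ 0)
    (hE : 1 - E ≠ 0) :
    HasDerivAt
      (fun u => Γ * Γ * Real.log (4 * R ^ 2 *
        ((1 - (Real.cos u * Real.cos θ₀ + Real.sin u * Real.sin θ₀ * E)) / 2)))
      (Γ * Γ * (Real.cos θ₀ / Real.sin θ₀)) θ₀ := by
  have h1 := (Real.hasDerivAt_cos θ₀).mul_const (Real.cos θ₀)
  have h2 := ((Real.hasDerivAt_sin θ₀).mul_const (Real.sin θ₀)).mul_const E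
  have h3 := ((((h1.add h2).const_sub 1).div_const 2).const_mul (4 * R ^ 2))
  have hpy := Real.sin_sq_add_cos_sq θ₀
  have hkey : 1 - (Real.cos θ₀ * Real.cos θ₀ + Real.sin θ₀ * Real.sin θ₀ * E)
      = Real.sin θ₀ * Real.sin θ₀ * (1 - E) := by linear_combination -hpy
  have harg : 4 * R ^ 2 *
      ((1 - (Real.cos θ₀ * Real.cos θ₀ + Real.sin θ₀ * Real.sin θ₀ * E)) / 2) ≠ 0 := by
    rw [hkey]
    intro h
    rcases mul_eq_zero.1 h with h | h
    · exact (by positivity : (0 : ℝ) < 4 * R ^ 2).ne' h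
    · rcases div_eq_zero_iff.1 h with h | h
      · exact mul_ne_zero (mul_ne_zero hS hS) hE h
      · norm_num at h
  have h4 := (h3.log harg).const_mul (Γ * Γ)
  refine h4.congr_deriv (Eq.symm ?_)
  congr 1
  simp only [Pi.add_apply]
  rw [div_eq_div_iff hS harg]
  linear_combination (-(2 * R ^ 2 * Real.cos θ₀)) * hpy

/-- Derivative of a pair term of the Hamiltonian in the colatitude variable,
second slot. -/
lemma hasDerivAt_th2 (R Γ θ₀ E : ℝ) (hR : R ≠ 0) (hS : Real.sin θ₀ ≠ 0)
    (hE : 1 - E ≠ 0) :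
    HasDerivAt
      (fun u => Γ * Γ * Real.log (4 * R ^ 2 *
        ((1 - (Real.cos θ₀ * Real.cos u + Real.sin θ₀ * Real.sin u * E)) / 2)))
      (Γ * Γ * (Real.cos θ₀ / Real.sin θ₀)) θ₀ := by
  have h1 := (Real.hasDerivAt_cos θ₀).const_mul (Real.cos θ₀)
  have h2 := ((Real.hasDerivAt_sin θ₀).const_mul (Real.sin θ₀)).mul_const E
  have h3 := ((((h1.add h2).const_sub 1).div_const 2).const_mul (4 * R ^ 2))
  have hpy := Real.sin_sq_add_cos_sq θ₀
  have hkey : 1 - (Real.cos θ₀ * Real.cos θ₀ + Real.sin θ₀ * Real.sin θ₀ * E)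
      = Real.sin θ₀ * Real.sin θ₀ * (1 - E) := by linear_combination -hpy
  have harg : 4 * R ^ 2 *
      ((1 - (Real.cos θ₀ * Real.cos θ₀ + Real.sin θ₀ * Real.sin θ₀ * E)) / 2) ≠ 0 := by
    rw [hkey]
    intro h
    rcases mul_eq_zero.1 h with h | h
    · exact (by positivity : (0 : ℝ) < 4 * R ^ 2).ne' h
    · rcases div_eq_zero_iff.1 h with h | h
      · exact mul_ne_zero (mul_ne_zero hS hS) hE h
      · norm_num at h
  have h4 := (h3.log harg).const_mul (Γ * Γ)
  refine h4.congr_deriv (Eq.symm ?_)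
  congr 1
  simp only [Pi.add_apply]
  rw [div_eq_div_iff hS harg]
  linear_combination (-(2 * R ^ 2 * Real.cos θ₀)) * hpy

/-- The Thomson ring on the sphere. -/
theorem thomson_ring_on_sphere (n : ℕ) (R Γ θ₀ : ℝ)
    (hR : 0 < R) (hΓ : Γ ≠ 0) (hθ : θ₀ ∈ Set.Ioo 0 π)
    (ω : ℝ)
    (hω : ω = Γ * ((n : ℝ) - 1) * (Real.cos θ₀ / Real.sin θ₀) /
      (4 * π * R ^ 2 * Real.sin θ₀))
    (Θ : ℝ → Fin n → ℝ) (Φ : ℝ → Fin n → ℝ)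
    (hΘ : ∀ t i, Θ t i = θ₀)
    (hΦ : ∀ t i, Φ t i = 2 * π * (i : ℝ) / n + ω * t) :
    ∀ i : Fin n, ∀ t : ℝ,
      HasDerivAt (fun s => Θ s i)
        ((1 / (R ^ 2 * Γ * Real.sin θ₀)) *
          deriv (fun u => sphereHam n R Γ (Θ t) (Function.update (Φ t) i u)) (Φ t i)) t ∧
      HasDerivAt (fun s => Φ s i)
        (-(1 / (R ^ 2 * Γ * Real.sin θ₀)) *
          deriv (fun u => sphereHam n R Γ (Function.update (Θ t) i u) (Φ t)) (Θ t i)) t := by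
  intro i t
  rcases Nat.eq_zero_or_pos n with hn | hn
  · subst hn; exact i.elim0
  haveI : NeZero n := ⟨hn.ne'⟩
  have hπ : (0 : ℝ) < π := Real.pi_pos
  have hS : 0 < Real.sin θ₀ := Real.sin_pos_of_pos_of_lt_pi hθ.1 hθ.2
  have hR' : R ≠ 0 := hR.ne'
  have hn' : (n : ℝ) ≠ 0 := Nat.cast_ne_zero.2 hn.ne'
  have hCS : Real.cos θ₀ * Real.cos θ₀ + Real.sin θ₀ * Real.sin θ₀ = 1 := by
    have := Real.sin_sq_add_cos_sq θ₀; linear_combination this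
  have hdiff : ∀ p q : Fin n, Φ t p - Φ t q = 2 * π * ((p : ℝ) - (q : ℝ)) / n := by
    intro p q; rw [hΦ, hΦ]; ring
  -- the vortices are at distinct points
  have hcosne : ∀ p q : Fin n, p ≠ q → 1 - Real.cos (Φ t p - Φ t q) ≠ 0 := by
    intro p q hpq h
    have hc1 : Real.cos (2 * π * ((p : ℝ) - (q : ℝ)) / n) = 1 := by
      rw [hdiff p q] at h; linarith
    obtain ⟨m, hm⟩ := (Real.cos_eq_one_iff _).1 hc1
    have h2 : (m : ℝ) * (2 * π) * n = 2 * π * ((p : ℝ) - (q : ℝ)) := by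
      rw [hm]; field_simp
    have h2π : (2 * π) ≠ 0 := by positivity
    have h3 : (m : ℝ) * n = (p : ℝ) - (q : ℝ) := by
      apply mul_left_cancel₀ h2π
      linear_combination h2
    have h4 : m * (n : ℤ) = ((p : ℕ) : ℤ) - ((q : ℕ) : ℤ) := by exact_mod_cast h3
    have hp' : ((p : ℕ) : ℤ) < n := by exact_mod_cast p.isLt
    have hq' : ((q : ℕ) : ℤ) < n := by exact_mod_cast q.isLt
    have hp0 : (0 : ℤ) ≤ ((p : ℕ) : ℤ) := by positivity
    have hq0 : (0 : ℤ) ≤ ((q : ℕ) : ℤ) := by positivity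
    have hn0 : (0 : ℤ) < n := by exact_mod_cast hn
    have hm0 : m = 0 := by
      rcases lt_trichotomy m 0 with hm' | hm' | hm'
      · have h5 : m * (n : ℤ) ≤ -1 * n :=
          mul_le_mul_of_nonneg_right (by omega) (by positivity)
        linarith
      · exact hm'
      · have h5 : 1 * (n : ℤ) ≤ m * n :=
          mul_le_mul_of_nonneg_right (by omega) (by positivity)
        linarith
    rw [hm0] at h4
    apply hpq
    apply Fin.ext
    omega
  constructor
  · -- colatitude equation: both sides vanish
    have hsum : HasDerivAt
        (fun u => sphereHam n R Γ (Θ t) (Function.update (Φ t) i u))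
        (-(1 / (4 * π)) * ∑ p ∈ Finset.univ.filter (fun p : Fin n × Fin n => p.1 < p.2),
          (if p.1 = i then
            Γ * Γ * (Real.sin (Φ t i - Φ t p.2) / (1 - Real.cos (Φ t i - Φ t p.2)))
          else if p.2 = i then
            Γ * Γ * (Real.sin (Φ t i - Φ t p.1) / (1 - Real.cos (Φ t i - Φ t p.1)))
          else 0)) (Φ t i) := by
      simp only [sphereHam]
      refine HasDerivAt.const_mul _ (HasDerivAt.fun_sum ?_)
      intro p hp
      obtain ⟨a, b⟩ := p
      simp only [Finset.mem_filter, Finset.mem_univ, true_and] at hp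
      dsimp only
      by_cases h1 : a = i
      · subst h1
        have h2 : b ≠ a := by rintro rfl; exact lt_irrefl _ hp
        rw [if_pos rfl]
        simp only [Function.update_self, Function.update_of_ne h2, hΘ]
        exact hasDerivAt_phi1 R Γ (Real.cos θ₀) (Real.sin θ₀) (Φ t b) (Φ t a)
          hR' hS.ne' (hcosne a b h2.symm) hCS
      · rw [if_neg h1]
        by_cases h2 : b = i
        · subst h2
          rw [if_pos rfl]
          simp only [Function.update_self, Function.update_of_ne h1, hΘ]
          exact hasDerivAt_phi2 R Γ (Real.cos θ₀) (Real.sin θ₀) (Φ t a) (Φ t b)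
            hR' hS.ne' (hcosne b a (Ne.symm h1)) hCS
        · rw [if_neg h2]
          simp only [Function.update_of_ne h1, Function.update_of_ne h2, hΘ]
          exact hasDerivAt_const _ _
    have e : (∑ p ∈ Finset.univ.filter (fun p : Fin n × Fin n => p.1 < p.2),
          (if p.1 = i then
            Γ * Γ * (Real.sin (Φ t i - Φ t p.2) / (1 - Real.cos (Φ t i - Φ t p.2)))
          else if p.2 = i then
            Γ * Γ * (Real.sin (Φ t i - Φ t p.1) / (1 - Real.cos (Φ t i - Φ t p.1)))
          else 0))
        = ∑ k ∈ Finset.univ.filter (fun k => k ≠ i),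
            Γ * Γ * (Real.sin (Φ t i - Φ t k) / (1 - Real.cos (Φ t i - Φ t k))) :=
      pair_sum i (fun k => Γ * Γ *
        (Real.sin (Φ t i - Φ t k) / (1 - Real.cos (Φ t i - Φ t k))))
    have e2 : ∑ k ∈ Finset.univ.filter (fun k => k ≠ i),
        Γ * Γ * (Real.sin (Φ t i - Φ t k) / (1 - Real.cos (Φ t i - Φ t k))) = 0 := by
      have e3 : ∀ k ∈ Finset.univ.filter (fun k : Fin n => k ≠ i),
          Γ * Γ * (Real.sin (Φ t i - Φ t k) / (1 - Real.cos (Φ t i - Φ t k)))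
          = Γ * Γ * (Real.sin (2 * π * ((i : ℝ) - (k : ℝ)) / n) /
              (1 - Real.cos (2 * π * ((i : ℝ) - (k : ℝ)) / n))) := by
        intro k _; rw [hdiff]
      rw [Finset.sum_congr rfl e3, ← Finset.mul_sum, ring_sum_zero n i, mul_zero]
    rw [hsum.deriv, e, e2, mul_zero, mul_zero]
    have hconst : (fun s => Θ s i) = fun _ => θ₀ := funext fun s => hΘ s i
    rw [hconst]
    exact hasDerivAt_const t θ₀
  · -- azimuthal equation
    have hsum : HasDerivAt
        (fun u => sphereHam n R Γ (Function.update (Θ t) i u) (Φ t))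
        (-(1 / (4 * π)) * ∑ p ∈ Finset.univ.filter (fun p : Fin n × Fin n => p.1 < p.2),
          (if p.1 = i then Γ * Γ * (Real.cos θ₀ / Real.sin θ₀)
          else if p.2 = i then Γ * Γ * (Real.cos θ₀ / Real.sin θ₀)
          else 0)) (Θ t i) := by
      simp only [sphereHam, hΘ]
      refine HasDerivAt.const_mul _ (HasDerivAt.fun_sum ?_)
      intro p hp
      obtain ⟨a, b⟩ := p
      simp only [Finset.mem_filter, Finset.mem_univ, true_and] at hp
      dsimp only
      by_cases h1 : a = i
      · subst h1
        have h2 : b ≠ a := by rintro rfl; exact lt_irrefl _ hp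
        rw [if_pos rfl]
        simp only [Function.update_self, Function.update_of_ne h2, hΘ]
        exact hasDerivAt_th1 R Γ θ₀ (Real.cos (Φ t a - Φ t b)) hR' hS.ne'
          (hcosne a b h2.symm)
      · rw [if_neg h1]
        by_cases h2 : b = i
        · subst h2
          rw [if_pos rfl]
          simp only [Function.update_self, Function.update_of_ne h1, hΘ]
          exact hasDerivAt_th2 R Γ θ₀ (Real.cos (Φ t a - Φ t b)) hR' hS.ne'
            (hcosne a b h1)
        · rw [if_neg h2]
          simp only [Function.update_of_ne h1, Function.update_of_ne h2, hΘ]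
          exact hasDerivAt_const _ _
    have e : (∑ p ∈ Finset.univ.filter (fun p : Fin n × Fin n => p.1 < p.2),
          (if p.1 = i then Γ * Γ * (Real.cos θ₀ / Real.sin θ₀)
          else if p.2 = i then Γ * Γ * (Real.cos θ₀ / Real.sin θ₀)
          else 0))
        = ∑ k ∈ Finset.univ.filter (fun k => k ≠ i),
            Γ * Γ * (Real.cos θ₀ / Real.sin θ₀) :=
      pair_sum i (fun _ => Γ * Γ * (Real.cos θ₀ / Real.sin θ₀))
    have hcard : (Finset.univ.filter (fun k : Fin n => k ≠ i)).card = n - 1 := by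
      have hflt : Finset.univ.filter (fun k : Fin n => k ≠ i) = Finset.univ.erase i := by
        ext k; simp [Finset.mem_erase, and_comm]
      rw [hflt, Finset.card_erase_of_mem (Finset.mem_univ i), Finset.card_univ,
        Fintype.card_fin]
    have e2 : ∑ k ∈ Finset.univ.filter (fun k : Fin n => k ≠ i),
        Γ * Γ * (Real.cos θ₀ / Real.sin θ₀)
        = ((n : ℝ) - 1) * (Γ * Γ * (Real.cos θ₀ / Real.sin θ₀)) := by
      rw [Finset.sum_const, hcard, nsmul_eq_mul, Nat.cast_sub hn, Nat.cast_one]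
    have hfinal : -(1 / (R ^ 2 * Γ * Real.sin θ₀)) *
        (-(1 / (4 * π)) * (((n : ℝ) - 1) * (Γ * Γ * (Real.cos θ₀ / Real.sin θ₀)))) = ω := by
      rw [hω]
      field_simp
    rw [hsum.deriv, e, e2, hfinal]
    have hfun : (fun s => Φ s i) = fun s => 2 * π * (i : ℝ) / n + ω * s :=
      funext fun s => hΦ s i
    rw [hfun]
    simpa using ((hasDerivAt_id t).const_mul ω).const_add (2 * π * (i : ℝ) / n)
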